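/- The polynomials Q_m(x) = 2^m m! x^m P_m(1/x) satisfy the differential recurrence Q_{m+1}(x) = (2m+1)(2+3x) Q_m(x) − 2x(1+x) Q_m'(x), with Q_0(x) = 1. -/

import Mathlib

open Polynomial Finset

/-- Coefficients of the Boros-Moll polynomial. -/
noncomputable def bmD (m i : ℕ) : ℝ :=
  (1 / 4 ^ m) * ∑ k ∈ Finset.Icc i m,
    (2 : ℝ) ^ k * ((2 * m - 2 * k).choose (m - k)) * ((m + k).choose k) * (k.choose i)

/-- `c_i(m) = 2^m m! d_{m-i}(m)`. -/
noncomputable def bmC (m i : ℕ) : ℝ := (2 : ℝ) ^ m * (Nat.factorial m) * bmD m (m - i)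

/-- `Q_m(x) = 2^m m! x^m P_m(1/x) = ∑_{i=0}^m c_i(m) x^i`. -/
noncomputable def bmQ (m : ℕ) : Polynomial ℝ :=
  ∑ i ∈ Finset.range (m + 1), Polynomial.C (bmC m i) * Polynomial.X ^ i

/-! ### Auxiliary definitions and lemmas -/

noncomputable def bmT (m k : ℕ) : ℝ :=
  (Nat.factorial m) / 2 ^ m *
    ((2:ℝ) ^ k * ((2 * m - 2 * k).choose (m - k)) * ((m + k).choose k))

lemma key1 (n : ℕ) : (n + 1) * Nat.choose (2*n+2) (n+1) = (4*n+2) * Nat.choose (2*n) n := by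
  have := Nat.succ_mul_centralBinom_succ n
  simp only [Nat.centralBinom] at this
  have h2 : 2*(n+1) = 2*n+2 := by ring
  rw [h2] at this
  rw [this]; ring

lemma key2 (n j : ℕ) :
    ((n:ℝ) + j + 2) * Nat.choose (n+2*j+3) (j+1)
      = (2*n + 4*j + 4) * Nat.choose (n+2*j+1) j + (n + 1) * Nat.choose (n+2*j+2) (j+1) := by
  have h1 : (j+1) ≤ n+2*j+3 := by omega
  have h2 : j ≤ n+2*j+1 := by omega
  have h3 : (j+1) ≤ n+2*j+2 := by omega
  rw [Nat.cast_choose ℝ h1, Nat.cast_choose ℝ h2, Nat.cast_choose ℝ h3]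
  have e1 : n+2*j+3 - (j+1) = n+j+2 := by omega
  have e2 : n+2*j+1 - j = n+j+1 := by omega
  have e3 : n+2*j+2 - (j+1) = n+j+1 := by omega
  rw [e1, e2, e3]
  have f1 : ((n+2*j+3).factorial : ℝ) = (n+2*j+3) * ((n+2*j+2) * (n+2*j+1).factorial) := by
    push_cast [show n+2*j+3 = (n+2*j+2)+1 from rfl, Nat.factorial_succ,
      show n+2*j+2 = (n+2*j+1)+1 from rfl]
    ring
  have f2 : ((n+2*j+2).factorial : ℝ) = (n+2*j+2) * (n+2*j+1).factorial := by
    push_cast [show n+2*j+2 = (n+2*j+1)+1 from rfl, Nat.factorial_succ]; ring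
  have f3 : ((n+j+2).factorial : ℝ) = (n+j+2) * (n+j+1).factorial := by
    push_cast [show n+j+2 = (n+j+1)+1 from rfl, Nat.factorial_succ]; ring
  have f4 : ((j+1).factorial : ℝ) = (j+1) * j.factorial := by
    push_cast [Nat.factorial_succ]; ring
  rw [f1, f2, f3, f4]
  have n1 : ((n+2*j+1).factorial : ℝ) ≠ 0 := by positivity
  have n2 : ((n+j+1).factorial : ℝ) ≠ 0 := by positivity
  have n3 : (j.factorial : ℝ) ≠ 0 := by positivity
  field_simp
  ring

lemma rec0 (m : ℕ) : bmT (m+1) 0 = (2*m+1) * bmT m 0 := by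
  unfold bmT
  have k1 : ((m:ℝ) + 1) * Nat.choose (2*m+2) (m+1) = (4*m+2) * Nat.choose (2*m) m := by
    exact_mod_cast congrArg (Nat.cast : ℕ → ℝ) (key1 m)
  have e1 : 2*(m+1) - 2*0 = 2*m+2 := by omega
  have e2 : (m+1) - 0 = m+1 := by omega
  have e3 : 2*m - 2*0 = 2*m := by omega
  have e4 : m - 0 = m := by omega
  rw [e1, e2, e3, e4]
  have f : ((m+1).factorial : ℝ) = (m+1) * m.factorial := by
    push_cast [Nat.factorial_succ]; ring
  rw [f]
  simp only [Nat.add_zero, Nat.choose_zero_right, pow_zero, pow_succ]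
  field_simp
  linear_combination k1

lemma recTop (m : ℕ) : bmT (m+1) (m+1) = (4*m+2) * bmT m m := by
  unfold bmT
  have k1 : ((m:ℝ) + 1) * Nat.choose (2*m+2) (m+1) = (4*m+2) * Nat.choose (2*m) m := by
    exact_mod_cast congrArg (Nat.cast : ℕ → ℝ) (key1 m)
  have e1 : 2*(m+1) - 2*(m+1) = 0 := by omega
  have e3 : 2*m - 2*m = 0 := by omega
  have e5 : m+1+(m+1) = 2*m+2 := by omega
  have e6 : m+m = 2*m := by omega
  rw [e1, e3, e5, e6, Nat.sub_self, Nat.sub_self]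
  have f : ((m+1).factorial : ℝ) = (m+1) * m.factorial := by
    push_cast [Nat.factorial_succ]; ring
  rw [f]
  simp only [Nat.choose_self, Nat.cast_one, pow_succ]
  field_simp
  linear_combination k1

lemma recMid (m k : ℕ) (hk1 : 1 ≤ k) (hk : k ≤ m) :
    bmT (m+1) k = (2*m+2*k) * bmT m (k-1) + (2*m+1-2*k) * bmT m k := by
  obtain ⟨j, rfl⟩ : ∃ j, k = j + 1 := ⟨k-1, by omega⟩
  obtain ⟨n, rfl⟩ : ∃ n, m = n + j + 1 := ⟨m - (j+1), by omega⟩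
  unfold bmT
  have k1 : ((n:ℝ) + 1) * Nat.choose (2*n+2) (n+1) = (4*n+2) * Nat.choose (2*n) n := by
    exact_mod_cast congrArg (Nat.cast : ℕ → ℝ) (key1 n)
  have k2 := key2 n j
  have e1 : 2*(n+j+1+1) - 2*(j+1) = 2*n+2 := by omega
  have e2 : (n+j+1+1) - (j+1) = n+1 := by omega
  have e3 : n+j+1+1+(j+1) = n+2*j+3 := by omega
  have e4 : j+1-1 = j := by omega
  have e5 : 2*(n+j+1) - 2*j = 2*n+2 := by omega
  have e6 : (n+j+1) - j = n+1 := by omega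
  have e7 : n+j+1+j = n+2*j+1 := by omega
  have e8 : 2*(n+j+1) - 2*(j+1) = 2*n := by omega
  have e9 : (n+j+1) - (j+1) = n := by omega
  have e10 : n+j+1+(j+1) = n+2*j+2 := by omega
  rw [e1, e2, e3, e4, e5, e6, e7, e8, e9, e10]
  have f : ((n+j+1+1).factorial : ℝ) = (n+j+2) * (n+j+1).factorial := by
    rw [show n+j+1+1 = (n+j+1)+1 from rfl, Nat.factorial_succ]; push_cast; ring
  rw [f]
  have n1 : ((2:ℝ)^(n+j+1)) ≠ 0 := by positivity
  push_cast
  rw [pow_succ (2:ℝ) (n+j+1), pow_succ (2:ℝ) j]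
  linear_combination
    (((n+j+1).factorial * 2^j / 2^(n+j+1) : ℝ) * ((2*n+2).choose (n+1) : ℝ)) * k2
    + (((n+j+1).factorial * 2^j / 2^(n+j+1) : ℝ) * ((n+2*j+2).choose (j+1) : ℝ)) * k1

lemma hc (m i : ℕ) (hi : i ≤ m) :
    bmC m (m - i) = ∑ k ∈ Finset.Icc i m, bmT m k * (k.choose i) := by
  unfold bmC bmD bmT
  rw [Nat.sub_sub_self hi, Finset.mul_sum, Finset.mul_sum]
  refine Finset.sum_congr rfl fun k hk => ?_
  have h4 : (4:ℝ)^m = 2^m * 2^m := by rw [← mul_pow]; norm_num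
  rw [h4]
  have : ((2:ℝ)^m) ≠ 0 := by positivity
  field_simp

lemma bmQ_eq (m : ℕ) :
    bmQ m = ∑ k ∈ range (m+1), C (bmT m k) * X^(m-k) * (X+1)^k := by
  have rhs : ∑ k ∈ range (m+1), C (bmT m k) * X^(m-k) * (X+1)^k
      = ∑ k ∈ range (m+1), ∑ j ∈ range (k+1),
          C (bmT m k * (k.choose j)) * X^(m-j) := by
    refine Finset.sum_congr rfl fun k hk => ?_
    simp only [mem_range, Nat.lt_succ_iff] at hk
    rw [add_pow, Finset.mul_sum, ← Finset.sum_range_reflect]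
    refine Finset.sum_congr rfl fun j hj => ?_
    simp only [mem_range, Nat.lt_succ_iff] at hj
    have e1 : k + 1 - 1 - j = k - j := by omega
    rw [e1, one_pow, mul_one, Nat.choose_symm hj]
    have hx : (X:ℝ[X])^(m-k) * X^(k-j) = X^(m-j) := by
      rw [← pow_add]; congr 1; omega
    have hcc : C (bmT m k * (k.choose j : ℝ)) = C (bmT m k) * ((k.choose j : ℕ) : ℝ[X]) := by
      rw [map_mul, Polynomial.C_eq_natCast]
    rw [hcc, ← hx]; ring
  have lhs : bmQ m
      = ∑ i ∈ range (m+1), ∑ k ∈ Finset.Icc i m,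
          C (bmT m k * (k.choose i)) * X^(m-i) := by
    unfold bmQ
    rw [← Finset.sum_range_reflect]
    refine Finset.sum_congr rfl fun i hi => ?_
    simp only [mem_range, Nat.lt_succ_iff] at hi
    have e : m + 1 - 1 - i = m - i := by omega
    rw [e, hc m i hi, map_sum, Finset.sum_mul]
  have mid : (∑ i ∈ range (m+1), ∑ k ∈ Finset.Icc i m, C (bmT m k * (k.choose i)) * X^(m-i))
      = ∑ k ∈ range (m+1), ∑ i ∈ range (k+1), C (bmT m k * (k.choose i)) * X^(m-i) := by
    refine Finset.sum_comm' fun i k => ?_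
    simp only [Finset.mem_range, Finset.mem_Icc, Nat.lt_succ_iff]
    omega
  rw [lhs, mid, rhs]

lemma L1 (p : ℕ) : (X:ℝ[X]) * derivative (X^p) = (p:ℝ[X]) * X^p := by
  rw [derivative_X_pow]
  cases p with
  | zero => simp
  | succ q =>
    rw [Polynomial.C_eq_natCast]
    simp only [Nat.add_sub_cancel]
    ring

lemma L2 (k : ℕ) : ((X:ℝ[X])+1) * derivative ((X+1)^k) = (k:ℝ[X]) * (X+1)^k := by
  rw [derivative_pow]
  cases k with
  | zero => simp
  | succ q =>
    rw [Polynomial.C_eq_natCast]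
    simp only [Nat.add_sub_cancel, derivative_add, derivative_X, derivative_one, add_zero,
      mul_one]
    ring

lemma step (a : ℝ) (m k : ℕ) (hk : k ≤ m) :
    (2*(m:ℝ[X])+1)*(2+3*X)*(C a * X^(m-k)*(X+1)^k)
      - 2*X*(1+X)*derivative (C a * X^(m-k)*(X+1)^k)
    = (2*(m:ℝ[X])+2*(k:ℝ[X])+2) * C a * X^(m-k)*(X+1)^(k+1)
      + (2*(m:ℝ[X])+1-2*(k:ℝ[X])) * C a * X^(m+1-k)*(X+1)^k := by
  have hd : derivative (C a * X^(m-k) * (X+1)^k)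
      = C a * (derivative ((X:ℝ[X])^(m-k)) * (X+1)^k
          + X^(m-k) * derivative (((X:ℝ[X])+1)^k)) := by
    rw [derivative_mul, derivative_mul, derivative_C]; ring
  rw [hd]
  have hcast : ((m-k : ℕ) : ℝ[X]) = (m:ℝ[X]) - (k:ℝ[X]) := by
    push_cast [hk]; ring
  have hx : (X:ℝ[X])^(m+1-k) = X * X^(m-k) := by
    rw [← pow_succ']; congr 1; omega
  have l1 := L1 (m-k)
  rw [hcast] at l1
  have l2 := L2 k
  rw [hx, pow_succ]
  linear_combination (-2*(1+X)*C a*((X:ℝ[X])+1)^k) * l1 + (-2*X*C a*(X:ℝ[X])^(m-k)) * l2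

theorem bmQ_recurrence :
    bmQ 0 = 1 ∧
    ∀ m : ℕ, bmQ (m + 1) =
      (2 * (m : Polynomial ℝ) + 1) * (2 + 3 * Polynomial.X) * bmQ m
        - 2 * Polynomial.X * (1 + Polynomial.X) * Polynomial.derivative (bmQ m) := by
  constructor
  · unfold bmQ bmC bmD
    norm_num
  · intro m
    rw [bmQ_eq m, bmQ_eq (m+1), derivative_sum, Finset.mul_sum, Finset.mul_sum,
      ← Finset.sum_sub_distrib]
    have hstep : ∑ k ∈ range (m+1),
        ((2*(m:ℝ[X])+1)*(2+3*X)*(C (bmT m k) * X^(m-k)*(X+1)^k)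
          - 2*X*(1+X)*derivative (C (bmT m k) * X^(m-k)*(X+1)^k))
        = ∑ k ∈ range (m+1),
          ((2*(m:ℝ[X])+2*(k:ℝ[X])+2) * C (bmT m k) * X^(m-k)*(X+1)^(k+1)
            + (2*(m:ℝ[X])+1-2*(k:ℝ[X])) * C (bmT m k) * X^(m+1-k)*(X+1)^k) := by
      refine Finset.sum_congr rfl fun k hk => ?_
      simp only [mem_range, Nat.lt_succ_iff] at hk
      exact step (bmT m k) m k hk
    rw [hstep, Finset.sum_add_distrib]
    -- Now handle the left side
    set At : ℕ → ℝ[X] := fun k =>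
      if k = 0 then 0 else (2*(m:ℝ[X])+2*(k:ℝ[X]))*C (bmT m (k-1))*X^(m+1-k)*(X+1)^k with hAt
    set Bt : ℕ → ℝ[X] := fun k =>
      if k = m+1 then 0 else (2*(m:ℝ[X])+1-2*(k:ℝ[X]))*C (bmT m k)*X^(m+1-k)*(X+1)^k with hBt
    have hpt : ∀ k ∈ range (m+2),
        C (bmT (m+1) k) * X^(m+1-k) * (X+1)^k = At k + Bt k := by
      intro k hk
      simp only [mem_range, Nat.lt_succ_iff] at hk
      by_cases h0 : k = 0
      · subst h0
        simp only [hAt, hBt, if_pos rfl, if_neg (by omega : ¬ (0:ℕ) = m+1), zero_add]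
        rw [rec0 m, map_mul]
        have : (C (2*(m:ℝ)+1) : ℝ[X]) = 2*(m:ℝ[X])+1 := by
          simp only [map_add, map_mul, map_one, map_ofNat, Polynomial.C_eq_natCast]
        rw [this]
        push_cast
        ring
      · by_cases htop : k = m+1
        · subst htop
          simp only [hAt, hBt, if_pos rfl, if_neg h0, add_zero, Nat.add_sub_cancel]
          rw [recTop m, map_mul]
          have : (C (4*(m:ℝ)+2) : ℝ[X]) = 4*(m:ℝ[X])+2 := by
            simp only [map_add, map_mul, map_ofNat, Polynomial.C_eq_natCast]
          rw [this]
          push_cast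
          ring
        · have h1 : 1 ≤ k := by omega
          have h2 : k ≤ m := by omega
          simp only [hAt, hBt, if_neg h0, if_neg htop]
          rw [recMid m k h1 h2, map_add, map_mul, map_mul]
          have c1 : (C (2*(m:ℝ)+2*(k:ℝ)) : ℝ[X]) = 2*(m:ℝ[X])+2*(k:ℝ[X]) := by
            simp only [map_add, map_mul, map_ofNat, Polynomial.C_eq_natCast]
          have c2 : (C (2*(m:ℝ)+1-2*(k:ℝ)) : ℝ[X]) = 2*(m:ℝ[X])+1-2*(k:ℝ[X]) := by
            simp only [map_add, map_sub, map_mul, map_one, map_ofNat, Polynomial.C_eq_natCast]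
          rw [c1, c2]
          ring
    rw [Finset.sum_congr rfl hpt, Finset.sum_add_distrib]
    congr 1
    · -- ∑ At = first sum
      rw [Finset.sum_range_succ']
      have hA0 : At 0 = 0 := by simp [hAt]
      rw [hA0, add_zero]
      refine Finset.sum_congr rfl fun k hk => ?_
      simp only [hAt, if_neg (Nat.succ_ne_zero k), Nat.add_sub_cancel]
      have e : m + 1 - (k+1) = m - k := by omega
      rw [e]
      push_cast
      ring
    · -- ∑ Bt = second sum
      rw [Finset.sum_range_succ]
      have hB1 : Bt (m+1) = 0 := by simp [hBt]
      rw [hB1, add_zero]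
      refine Finset.sum_congr rfl fun k hk => ?_
      simp only [mem_range, Nat.lt_succ_iff] at hk
      simp only [hBt, if_neg (by omega : ¬ k = m+1)]
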